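/- Let G be a simple graph in which every vertex is incident with at least one edge, and let n ∈ ℕ. Then |G| is n-arc connected if and only if for every choice of at most n points of |G| ∖ V (points lying in the interiors of edges) there is an arc in |G| containing all of them. -/

import Mathlib

open Topology

noncomputable section

variable {V : Type*}

open Classical in
/-- The Dirac function marking a vertex: the point of `|G|` corresponding to vertex `v`. -/
noncomputable def vertexPoint (v : V) : V → ℝ := fun u => if u = v then 1 else 0

open Classical in
/-- The point of `|G|` lying on the edge `vw` at parameter `t` (measured from `v` towards `w`). -/
noncomputable def edgePoint (v w : V) (t : ℝ) : V → ℝ :=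
  fun u => (if u = v then 1 - t else 0) + (if u = w then t else 0)

/-- The geometric realization `|G|` of a simple graph `G`, realized as the set of
formal convex combinations of adjacent pairs of vertices; each closed edge carries
its usual topology as a copy of `[0,1]`. -/
def GraphRealization (G : SimpleGraph V) : Set (V → ℝ) :=
  {x | (∃ v, x = vertexPoint v) ∨
    ∃ v w t, G.Adj v w ∧ t ∈ Set.Icc (0 : ℝ) 1 ∧ x = edgePoint v w t}

/-- A subset of a topological space is an arc if it is homeomorphic to `[0,1]`. -/
def IsArc {X : Type*} [TopologicalSpace X] (A : Set X) : Prop :=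
  Nonempty (↥A ≃ₜ ↥unitInterval)

/-- A space is `n`-arc connected if any at most `n` points lie on a common arc. -/
def NArcConn (X : Type*) [TopologicalSpace X] (n : ℕ) : Prop :=
  ∀ S : Finset X, S.card ≤ n → ∃ A : Set X, IsArc A ∧ ↑S ⊆ A

/-- The unit circle in the plane. -/
def unitCircleSet : Set (ℝ × ℝ) := {p | p.1 ^ 2 + p.2 ^ 2 = 1}

/-- A subset of a topological space is a simple closed curve if homeomorphic to the circle. -/
def IsSimpleClosedCurve {X : Type*} [TopologicalSpace X] (C : Set X) : Prop :=
  Nonempty (↥C ≃ₜ ↥unitCircleSet)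

/-- A space is `n`-circle connected if any at most `n` points lie on a common
simple closed curve. -/
def NCircleConn (X : Type*) [TopologicalSpace X] (n : ℕ) : Prop :=
  ∀ S : Finset X, S.card ≤ n → ∃ C : Set X, IsSimpleClosedCurve C ∧ ↑S ⊆ C

/-- A space is `n`-strongly arc connected if any list of at most `n` points is contained
in an arc, the points appearing along the arc in the listed order. -/
def NStrongArcConn (X : Type*) [TopologicalSpace X] (n : ℕ) : Prop :=
  ∀ l : List X, l.length ≤ n →
    ∃ f : ↥unitInterval → X, Topology.IsEmbedding f ∧
      ∃ t : Fin l.length → ↥unitInterval, Monotone t ∧ ∀ i, f (t i) = l.get i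

/-- A graph is `k`-connected if removing fewer than `k` vertices leaves it connected. -/
def KConnected (G : SimpleGraph V) (k : ℕ) : Prop :=
  ∀ S : Set V, S.encard < (k : ℕ∞) → (G.induce (Sᶜ : Set V)).Connected

/-- A graph is cyclically connected if any two vertices lie on a common cycle. -/
def CyclicallyConnected (G : SimpleGraph V) : Prop :=
  ∀ v w : V, ∃ (u : V) (c : G.Walk u u), c.IsCycle ∧ v ∈ c.support ∧ w ∈ c.support

/-- The circle of radius `r` centered at `c` in the plane. -/
def circleAt (c : ℝ × ℝ) (r : ℝ) : Set (ℝ × ℝ) :=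
  {p | (p.1 - c.1) ^ 2 + (p.2 - c.2) ^ 2 = r ^ 2}

/-- The horizontal segment at height `y` from abscissa `a` to `b`. -/
def hSeg (y a b : ℝ) : Set (ℝ × ℝ) := {p | p.2 = y ∧ a ≤ p.1 ∧ p.1 ≤ b}

/-- The θ-curve: unit circle together with horizontal diameter. -/
def thetaSet : Set (ℝ × ℝ) := circleAt (0, 0) 1 ∪ hSeg 0 (-1) 1

/-- Figure-eight: two unit circles meeting at the origin. -/
def figureEightSet : Set (ℝ × ℝ) := circleAt (-1, 0) 1 ∪ circleAt (1, 0) 1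

/-- Lollipop: unit circle with the segment from `(1,0)` to `(2,0)` attached. -/
def lollipopSet : Set (ℝ × ℝ) := circleAt (0, 0) 1 ∪ hSeg 0 1 2

/-- Lollipop with its free endpoint removed. -/
def openLollipopSet : Set (ℝ × ℝ) := lollipopSet \ {(2, 0)}

/-- Dumbbell: two disjoint unit circles joined by a segment. -/
def dumbbellSet : Set (ℝ × ℝ) := circleAt (-2, 0) 1 ∪ circleAt (2, 0) 1 ∪ hSeg 0 (-1) 1

/-- Happy-face curve: two circles meeting at a point, joined by a further arc. -/
def happyFaceSet : Set (ℝ × ℝ) :=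
  circleAt (-1, 0) 1 ∪ circleAt (1, 0) 1 ∪ {p | p.1 ^ 2 + p.2 ^ 2 = 4 ∧ p.2 ≤ 0}

/-- Baguette curve: two disjoint circles joined by two disjoint arcs. -/
def baguetteSet : Set (ℝ × ℝ) :=
  circleAt (-3, 0) 1 ∪ circleAt (3, 0) 1 ∪ hSeg 0 (-2) 2 ∪ hSeg 1 (-3) 3

/-- A graph is a basic 4-ac graph iff its realization is homeomorphic to a circle,
a θ-curve, a happy-face curve or a baguette curve (this captures precisely the
subdivisions of those four graphs). -/
def IsBasicFourAC {W : Type*} (H : SimpleGraph W) : Prop :=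
  Nonempty (↥(GraphRealization H) ≃ₜ ↥unitCircleSet) ∨
  Nonempty (↥(GraphRealization H) ≃ₜ ↥thetaSet) ∨
  Nonempty (↥(GraphRealization H) ≃ₜ ↥happyFaceSet) ∨
  Nonempty (↥(GraphRealization H) ≃ₜ ↥baguetteSet)

/-- A chain-graph decomposition of the connected graph `G`: links indexed by an
interval `J` of `ℤ`, non-consecutive links are disjoint, consecutive links share
exactly one vertex. -/
structure IsChainGraph (G : SimpleGraph V) (J : Set ℤ) (L : ℤ → G.Subgraph) : Prop where
  connected : G.Connected
  ordConnected : J.OrdConnected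
  nonempty : J.Nonempty
  cover : (⨆ i ∈ J, L i) = (⊤ : G.Subgraph)
  sep : ∀ i ∈ J, ∀ j ∈ J, i + 1 < j → (L i).verts ∩ (L j).verts = ∅
  link : ∀ i ∈ J, i + 1 ∈ J → ∃ v, (L i).verts ∩ (L (i + 1)).verts = {v}

/-- A cut-vertex: a vertex whose removal disconnects the graph. -/
def IsCutVertex (G : SimpleGraph V) (v : V) : Prop :=
  ¬ (G.induce ({v}ᶜ : Set V)).Connected

/-- A block: a maximal 2-connected subgraph. -/
def IsBlock (G : SimpleGraph V) (H : G.Subgraph) : Prop :=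
  KConnected H.coe 2 ∧ ∀ H' : G.Subgraph, H ≤ H' → KConnected H'.coe 2 → H' = H

/-- The block graph of `G`: the bipartite graph on cut-vertices and blocks, a cut-vertex
being adjacent to the blocks containing it. -/
def BlockGraph (G : SimpleGraph V) :
    SimpleGraph ({v : V // IsCutVertex G v} ⊕ {H : G.Subgraph // IsBlock G H}) :=
  SimpleGraph.fromRel fun a b =>
    ∃ (c : {v : V // IsCutVertex G v}) (B : {H : G.Subgraph // IsBlock G H}),
      a = Sum.inl c ∧ b = Sum.inr B ∧ (c : V) ∈ (B : G.Subgraph).verts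

/-- An `A`–`B` path: a path starting in `A`, ending in `B` and meeting `A ∪ B` only
in these two endvertices. -/
structure ABPath (G : SimpleGraph V) (A B : Set V) where
  first : V
  last : V
  walk : G.Walk first last
  isPath : walk.IsPath
  firstA : first ∈ A
  lastB : last ∈ B
  meetA : ∀ v ∈ walk.support, v ∈ A → v = first
  meetB : ∀ v ∈ walk.support, v ∈ B → v = last

/-- A family of pairwise vertex-disjoint paths. -/
def PathFamilyDisjoint {G : SimpleGraph V} {A B : Set V} {k : ℕ}
    (P : Fin k → ABPath G A B) : Prop :=
  ∀ i j, i ≠ j → ∀ v, v ∈ (P i).walk.support → v ∉ (P j).walk.support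

/-- The set of vertices used by a family of paths. -/
def familySupport {G : SimpleGraph V} {A B : Set V} {k : ℕ}
    (P : Fin k → ABPath G A B) : Set V :=
  {v | ∃ i, v ∈ (P i).walk.support}

/-- The set of edges used by a family of paths. -/
def familyEdges {G : SimpleGraph V} {A B : Set V} {k : ℕ}
    (P : Fin k → ABPath G A B) : Set (Sym2 V) :=
  {e | ∃ i, e ∈ (P i).walk.edges}

/-- A walk `W` (with no repeated edges) is alternating with respect to the disjoint
path family `P`: it starts in `A` off the paths; repeated vertices lie on paths of the
family; upon hitting a path by a new edge it follows that path backwards for at least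
one edge; and it traverses edges of paths of the family only backwards. -/
structure IsAlternatingWalk {G : SimpleGraph V} {A B : Set V} {k : ℕ}
    (P : Fin k → ABPath G A B) {x y : V} (W : G.Walk x y) : Prop where
  trail : W.IsTrail
  startA : x ∈ A
  startOff : x ∉ familySupport P
  repeats : ∀ v, List.Duplicate v W.support → v ∈ familySupport P
  follows : ∀ (i : ℕ) (hi : i < W.darts.length) (j : Fin k),
      (W.darts.get ⟨i, hi⟩).snd ∈ (P j).walk.support →
      (W.darts.get ⟨i, hi⟩).edge ∉ (P j).walk.edges →
      ∃ h : i + 1 < W.darts.length, (W.darts.get ⟨i + 1, h⟩).symm ∈ (P j).walk.darts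
  backward : ∀ d ∈ W.darts, ∀ j : Fin k,
      d.edge ∈ (P j).walk.edges → d.symm ∈ (P j).walk.darts

end
section Aux
variable {V : Type*} {G : SimpleGraph V}

lemma edgePoint_zero (v w : V) : edgePoint v w 0 = vertexPoint v := by
  funext u
  simp [edgePoint, vertexPoint]

lemma edgePoint_apply_right {v w : V} (h : w ≠ v) (t : ℝ) : edgePoint v w t w = t := by
  simp [edgePoint, h]

lemma edgePoint_mem {v w : V} (hvw : G.Adj v w) {t : ℝ} (ht : t ∈ Set.Icc (0:ℝ) 1) :
    edgePoint v w t ∈ GraphRealization G := Or.inr ⟨v, w, t, hvw, ht, rfl⟩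

lemma vertexPoint_mem (v : V) : vertexPoint v ∈ GraphRealization G := Or.inl ⟨v, rfl⟩

lemma edgePoint_ne_vertexPoint {v w : V} (hvw : v ≠ w) {t : ℝ} (h0 : 0 < t) (h1 : t < 1)
    (u : V) : edgePoint v w t ≠ vertexPoint u := by
  intro h
  have hv := congrFun h v
  simp only [edgePoint, vertexPoint, if_pos rfl, if_neg hvw] at hv
  by_cases hu : v = u <;> simp [hu] at hv <;> linarith

lemma edgePoint_comm (a b : V) (t : ℝ) : edgePoint a b t = edgePoint b a (1 - t) := by
  funext u
  simp only [edgePoint]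
  by_cases h1 : u = a <;> by_cases h2 : u = b <;> simp [h1, h2] <;> ring

lemma continuous_edgePoint (v w : V) : Continuous fun t : ℝ => edgePoint v w t := by
  refine continuous_pi fun u => ?_
  simp only [edgePoint]
  classical
  exact (Continuous.if_const _ (by fun_prop) continuous_const).add
    (Continuous.if_const _ (by fun_prop) continuous_const)

lemma mem_openEdge {v w : V} (hvw : v ≠ w) {x : V → ℝ} (hx : x ∈ GraphRealization G)
    (hv : 0 < x v) (hw : 0 < x w) :
    x = edgePoint v w (x w) ∧ x w < 1 := by
  rcases hx with ⟨u, rfl⟩ | ⟨a, b, t, hab, ⟨ht0, ht1⟩, rfl⟩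
  · exfalso
    by_cases h1 : v = u <;> by_cases h2 : w = u
    · exact hvw (h1.trans h2.symm)
    all_goals simp [vertexPoint, h1, h2] at hv hw
  · have hab' : a ≠ b := hab.ne
    have hxv : v = a ∨ v = b := by
      by_contra hc
      push_neg at hc
      simp [edgePoint, hc.1, hc.2] at hv
    have hxw : w = a ∨ w = b := by
      by_contra hc
      push_neg at hc
      simp [edgePoint, hc.1, hc.2] at hw
    rcases hxv with rfl | rfl
    · rcases hxw with rfl | rfl
      · exact absurd rfl hvw
      · have hw' : edgePoint v w t w = t := edgePoint_apply_right (Ne.symm hvw) t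
        have hv' : edgePoint v w t v = 1 - t := by simp [edgePoint, if_pos rfl, if_neg hvw]
        rw [hv'] at hv
        rw [hw']
        exact ⟨rfl, by linarith⟩
    · rcases hxw with rfl | rfl
      · -- v = b, w = a : x = edgePoint w v t
        have hcomm := edgePoint_comm w v t
        have hw' : edgePoint w v t w = 1 - t := by
          simp [edgePoint, if_pos rfl, if_neg (Ne.symm hvw)]
        have hv' : edgePoint w v t v = t := edgePoint_apply_right hvw t
        rw [hv'] at hv
        rw [hw', hcomm]
        exact ⟨rfl, by linarith⟩
      · exact absurd rfl hvw

end Aux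

section Step
variable {V : Type*} {G : SimpleGraph V}

lemma step_extend {v w : V} (hvw : G.Adj v w)
    (f : ↥unitInterval → ↥(GraphRealization G)) (hfc : Continuous f)
    (hfi : Function.Injective f)
    (hmem : edgePoint v w 4⁻¹ ∈ Set.range fun u => (f u : V → ℝ)) :
    ∃ g : ↥unitInterval → ↥(GraphRealization G), Continuous g ∧ Function.Injective g ∧
      Set.range f ⊆ Set.range g ∧
      vertexPoint v ∈ Set.range fun u => (g u : V → ℝ) := by
  classical
  have hne : v ≠ w := hvw.ne
  set A : Set (V → ℝ) := Set.range fun u => (f u : V → ℝ) with hA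
  have hAcl : IsClosed A := (isCompact_range (continuous_subtype_val.comp hfc)).isClosed
  set T : Set ℝ := {t | t ∈ Set.Icc (0:ℝ) 4⁻¹ ∧ edgePoint v w t ∈ A} with hT
  have hTcl : IsClosed T := by
    have h : T = Set.Icc (0:ℝ) 4⁻¹ ∩ (fun t => edgePoint v w t) ⁻¹' A := rfl
    rw [h]
    exact isClosed_Icc.inter (hAcl.preimage (continuous_edgePoint v w))
  have hTne : T.Nonempty := ⟨4⁻¹, ⟨by norm_num, le_refl _⟩, hmem⟩
  have hTbdd : BddBelow T := ⟨0, fun t ht => ht.1.1⟩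
  set c := sInf T with hc
  have hcT : c ∈ T := hTcl.csInf_mem hTne hTbdd
  have hc0 : 0 ≤ c := hcT.1.1
  have hc4 : c ≤ 4⁻¹ := hcT.1.2
  have hnotA : ∀ t : ℝ, 0 ≤ t → t < c → edgePoint v w t ∉ A := by
    intro t h0 h1 hmem'
    have ht : t ∈ T := ⟨⟨h0, le_of_lt (lt_of_lt_of_le h1 hc4)⟩, hmem'⟩
    exact absurd (csInf_le hTbdd ht) (not_le.mpr h1)
  have hepinj : ∀ t1 t2 : ℝ, edgePoint v w t1 = edgePoint v w t2 → t1 = t2 := by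
    intro t1 t2 h
    have h' := congrFun h w
    rwa [edgePoint_apply_right (Ne.symm hne), edgePoint_apply_right (Ne.symm hne)] at h'
  rcases eq_or_lt_of_le hc0 with hceq | hcpos
  · refine ⟨f, hfc, hfi, le_refl _, ?_⟩
    have h := hcT.2
    rw [← hceq, edgePoint_zero] at h
    exact h
  · obtain ⟨q, hq⟩ := hcT.2
    -- hq : (f q : V → ℝ) = edgePoint v w c
    set F : ℝ → V → ℝ := fun r => (f (Set.projIcc 0 1 zero_le_one r) : V → ℝ) with hF
    have hFc : Continuous F := continuous_subtype_val.comp (hfc.comp continuous_projIcc)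
    have hFmem : ∀ r, F r ∈ GraphRealization G := fun r => (f _).2
    have hFA : ∀ r, F r ∈ A := fun r => ⟨_, rfl⟩
    have hFeq : ∀ x : ↥unitInterval, F (x : ℝ) = (f x : V → ℝ) := by
      intro x
      rw [hF]
      simp only [Set.projIcc_val]
    have hq01 : (q : ℝ) = 0 ∨ (q : ℝ) = 1 := by
      by_contra hcon
      push_neg at hcon
      have hq0 : 0 < (q : ℝ) := lt_of_le_of_ne q.2.1 (Ne.symm hcon.1)
      have hq1 : (q : ℝ) < 1 := lt_of_le_of_ne q.2.2 hcon.2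
      set τ := (q : ℝ) with hτ
      have hFτ : F τ = edgePoint v w c := by rw [hFeq q]; exact hq
      set U : Set ℝ := {r | 0 < F r v ∧ 0 < F r w} ∩ Set.Ioo 0 1 with hU
      have hUopen : IsOpen U := by
        refine IsOpen.inter ?_ isOpen_Ioo
        exact (isOpen_lt continuous_const ((continuous_apply v).comp hFc)).inter
          (isOpen_lt continuous_const ((continuous_apply w).comp hFc))
      have hτU : τ ∈ U := by
        refine ⟨⟨?_, ?_⟩, hq0, hq1⟩
        · rw [hFτ]
          simp only [edgePoint, if_pos rfl, if_neg hne]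
          norm_num
          linarith
        · rw [hFτ, edgePoint_apply_right (Ne.symm hne)]
          exact hcpos
      obtain ⟨δ, hδ, hball⟩ := Metric.isOpen_iff.1 hUopen τ hτU
      set g0 : ℝ → ℝ := fun r => F r w with hg0
      have hg0c : Continuous g0 := (continuous_apply w).comp hFc
      have hkey : ∀ r ∈ Metric.ball τ δ, F r = edgePoint v w (g0 r) ∧ 0 < g0 r ∧ g0 r < 1 := by
        intro r hr
        obtain ⟨⟨h1, h2⟩, _⟩ := hball hr
        obtain ⟨heq, hlt⟩ := mem_openEdge hne (hFmem r) h1 h2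
        exact ⟨heq, h2, hlt⟩
      have hge : ∀ r ∈ Metric.ball τ δ, c ≤ g0 r := by
        intro r hr
        by_contra hlt
        push_neg at hlt
        refine hnotA (g0 r) (le_of_lt (hkey r hr).2.1) hlt ?_
        rw [← (hkey r hr).1]
        exact hFA r
      have hginj : Set.InjOn g0 (Metric.ball τ δ) := by
        intro r1 h1 r2 h2 heq
        have hFr : F r1 = F r2 := by rw [(hkey r1 h1).1, (hkey r2 h2).1, heq]
        have hr1 : r1 ∈ Set.Icc (0:ℝ) 1 :=
          ⟨le_of_lt (hball h1).2.1, le_of_lt (hball h1).2.2⟩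
        have hr2 : r2 ∈ Set.Icc (0:ℝ) 1 :=
          ⟨le_of_lt (hball h2).2.1, le_of_lt (hball h2).2.2⟩
        have hfeq := hfi (Subtype.coe_injective hFr)
        rw [Set.projIcc_of_mem _ hr1, Set.projIcc_of_mem _ hr2] at hfeq
        exact congrArg Subtype.val hfeq
      have hτball : τ ∈ Metric.ball τ δ := Metric.mem_ball_self hδ
      have hτg : g0 τ = c := by
        rw [hg0]
        simp only [hFτ]
        exact edgePoint_apply_right (Ne.symm hne) c
      set a := τ - δ/2 with ha
      set b := τ + δ/2 with hb
      have haball : a ∈ Metric.ball τ δ := by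
        rw [Metric.mem_ball, Real.dist_eq, ha]
        rw [abs_lt]
        constructor <;> linarith
      have hbball : b ∈ Metric.ball τ δ := by
        rw [Metric.mem_ball, Real.dist_eq, hb]
        rw [abs_lt]
        constructor <;> linarith
      have hca : c < g0 a := by
        refine lt_of_le_of_ne (hge a haball) fun h => ?_
        have := hginj haball hτball (h.symm.trans hτg.symm)
        rw [ha] at this
        linarith
      have hcb : c < g0 b := by
        refine lt_of_le_of_ne (hge b hbball) fun h => ?_
        have := hginj hbball hτball (h.symm.trans hτg.symm)
        rw [hb] at this
        linarith
      set y := (c + min (g0 a) (g0 b)) / 2 with hy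
      have hmin : c < min (g0 a) (g0 b) := lt_min hca hcb
      have hyc : c < y := by rw [hy]; linarith
      have hya : y < g0 a := by
        have := min_le_left (g0 a) (g0 b)
        rw [hy]; linarith
      have hyb : y < g0 b := by
        have := min_le_right (g0 a) (g0 b)
        rw [hy]; linarith
      have haτ : a ≤ τ := by rw [ha]; linarith
      have hτb : τ ≤ b := by rw [hb]; linarith
      obtain ⟨σ1, hσ1m, hσ1⟩ := intermediate_value_Icc' haτ hg0c.continuousOn
        (Set.mem_Icc.2 ⟨by rw [hτg]; linarith, le_of_lt hya⟩)
      obtain ⟨σ2, hσ2m, hσ2⟩ := intermediate_value_Icc hτb hg0c.continuousOn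
        (Set.mem_Icc.2 ⟨by rw [hτg]; linarith, le_of_lt hyb⟩)
      have hσ1b : σ1 ∈ Metric.ball τ δ := by
        rw [Metric.mem_ball, Real.dist_eq, abs_lt]
        have h1 := hσ1m.1; have h2 := hσ1m.2
        constructor <;> [linarith [ha ▸ h1]; linarith]
      have hσ2b : σ2 ∈ Metric.ball τ δ := by
        rw [Metric.mem_ball, Real.dist_eq, abs_lt]
        have h1 := hσ2m.1; have h2 := hσ2m.2
        constructor <;> [linarith; linarith [hb ▸ h2]]
      have hσ1τ : σ1 ≠ τ := by
        intro h
        rw [h, hτg] at hσ1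
        linarith
      have heq12 : σ1 = σ2 := hginj hσ1b hσ2b (by rw [hσ1, hσ2])
      have hlt12 : σ1 < σ2 :=
        lt_of_lt_of_le (lt_of_le_of_ne hσ1m.2 hσ1τ) hσ2m.1
      rw [heq12] at hlt12
      exact lt_irrefl _ hlt12
    -- normalize
    obtain ⟨f1, hf1c, hf1i, hf1r, hf10⟩ :
        ∃ f1 : ↥unitInterval → ↥(GraphRealization G), Continuous f1 ∧ Function.Injective f1 ∧
          Set.range f1 = Set.range f ∧ (f1 0 : V → ℝ) = edgePoint v w c := by
      rcases hq01 with h0 | h1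
      · have hq' : q = 0 := Subtype.ext h0
        exact ⟨f, hfc, hfi, rfl, by rw [← hq']; exact hq⟩
      · refine ⟨f ∘ unitInterval.symm, hfc.comp unitInterval.continuous_symm,
          hfi.comp unitInterval.symm_bijective.injective, ?_, ?_⟩
        · rw [Set.range_comp, unitInterval.symm_bijective.surjective.range_eq, Set.image_univ]
        · have hq' : q = 1 := Subtype.ext h1
          show (f (unitInterval.symm 0) : V → ℝ) = edgePoint v w c
          rw [unitInterval.symm_zero, ← hq']
          exact hq
    have hrange1 : ∀ x : ↥unitInterval, (f1 x : V → ℝ) ∈ A := by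
      intro x
      have hx : f1 x ∈ Set.range f := hf1r ▸ Set.mem_range_self x
      obtain ⟨u, hu⟩ := hx
      exact ⟨u, congrArg Subtype.val hu⟩
    set F1 : ℝ → V → ℝ := fun r => (f1 (Set.projIcc 0 1 zero_le_one r) : V → ℝ) with hF1
    have hF1c : Continuous F1 := continuous_subtype_val.comp (hf1c.comp continuous_projIcc)
    have hF1eq : ∀ x : ↥unitInterval, F1 (x : ℝ) = (f1 x : V → ℝ) := by
      intro x
      rw [hF1]
      simp only [Set.projIcc_val]
    set D : ℝ → V → ℝ := fun r => if r ≤ 2⁻¹ then edgePoint v w (2 * r * c) else F1 (2 * r - 1)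
      with hD
    have hDc : Continuous D := by
      refine Continuous.if_le ?_ ?_ continuous_id continuous_const ?_
      · exact (continuous_edgePoint v w).comp (by fun_prop)
      · exact hF1c.comp (by fun_prop)
      · intro r hr
        rw [hr]
        have h1 : 2 * (2⁻¹ : ℝ) * c = c := by ring
        have h2 : 2 * (2⁻¹ : ℝ) - 1 = 0 := by ring
        rw [h1, h2]
        have h3 : F1 ((0 : ↥unitInterval) : ℝ) = (f1 0 : V → ℝ) := hF1eq 0
        simp only [Set.Icc.coe_zero] at h3
        rw [h3, hf10]
    have hDmem : ∀ r : ℝ, r ∈ Set.Icc (0:ℝ) 1 → D r ∈ GraphRealization G := by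
      intro r hr
      rw [hD]
      by_cases h : r ≤ 2⁻¹
      · simp only [if_pos h]
        refine edgePoint_mem hvw ⟨?_, ?_⟩
        · nlinarith [hr.1, hc0]
        · nlinarith [hr.1, hc0, hc4, h]
      · simp only [if_neg h]
        exact (f1 _).2
    set g : ↥unitInterval → ↥(GraphRealization G) := fun x => ⟨D (x : ℝ), hDmem x x.2⟩ with hg
    have hgc : Continuous g := Continuous.subtype_mk (hDc.comp continuous_subtype_val) _
    have hF1A : ∀ r : ℝ, F1 r ∈ A := fun r => hrange1 _
    have hprojmem : ∀ y : ↥unitInterval, ¬ ((y : ℝ) ≤ 2⁻¹) →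
        2 * (y : ℝ) - 1 ∈ Set.Icc (0:ℝ) 1 := by
      intro y hy
      constructor
      · push_neg at hy; linarith
      · have := y.2.2; linarith
    have key : ∀ x y : ↥unitInterval, (x : ℝ) ≤ 2⁻¹ → ¬ ((y : ℝ) ≤ 2⁻¹) →
        D (x : ℝ) = D (y : ℝ) → False := by
      intro x y hx hy hDxy
      rw [hD] at hDxy
      simp only [if_pos hx, if_neg hy] at hDxy
      have hyIcc := hprojmem y hy
      have h2xc : 2 * (x : ℝ) * c ≤ c := by nlinarith [x.2.1, x.2.2, hc0]
      have hF1y : F1 (2 * (y : ℝ) - 1) = (f1 ⟨2 * (y : ℝ) - 1, hyIcc⟩ : V → ℝ) := by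
        simp only [hF1, Set.projIcc_of_mem zero_le_one hyIcc]
      rcases lt_or_eq_of_le h2xc with hlt | heqc
      · refine hnotA (2 * (x : ℝ) * c) (by nlinarith [x.2.1, hc0]) hlt ?_
        rw [hDxy]
        exact hF1A _
      · rw [heqc] at hDxy
        have hfeq : f1 0 = f1 ⟨2 * (y : ℝ) - 1, hyIcc⟩ := by
          apply Subtype.coe_injective
          show (f1 0 : V → ℝ) = (f1 ⟨2 * (y : ℝ) - 1, hyIcc⟩ : V → ℝ)
          rw [hf10, hDxy, hF1y]
        have h0y := congrArg Subtype.val (hf1i hfeq)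
        simp only [Set.Icc.coe_zero] at h0y
        push_neg at hy
        linarith
    have hginj : Function.Injective g := by
      intro x y hxy
      have hDxy : D (x : ℝ) = D (y : ℝ) := congrArg Subtype.val hxy
      by_cases hx : (x : ℝ) ≤ 2⁻¹ <;> by_cases hy : (y : ℝ) ≤ 2⁻¹
      · rw [hD] at hDxy
        simp only [if_pos hx, if_pos hy] at hDxy
        have h2 := hepinj _ _ hDxy
        have h3 : 2 * (x : ℝ) = 2 * (y : ℝ) := mul_right_cancel₀ (ne_of_gt hcpos) h2
        exact Subtype.ext (by linarith)
      · exact absurd (key x y hx hy hDxy) not_false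
      · exact absurd (key y x hy hx hDxy.symm) not_false
      · rw [hD] at hDxy
        simp only [if_neg hx, if_neg hy] at hDxy
        have hxIcc := hprojmem x hx
        have hyIcc := hprojmem y hy
        simp only [hF1, Set.projIcc_of_mem zero_le_one hxIcc,
          Set.projIcc_of_mem zero_le_one hyIcc] at hDxy
        have h2 := congrArg Subtype.val (hf1i (Subtype.coe_injective hDxy))
        simp only at h2
        exact Subtype.ext (by linarith)
    have hsub : Set.range f ⊆ Set.range g := by
      rw [← hf1r]
      rintro p ⟨u, rfl⟩
      have hu2 : ((u : ℝ) + 1) / 2 ∈ Set.Icc (0:ℝ) 1 :=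
        ⟨by have := u.2.1; linarith, by have := u.2.2; linarith⟩
      refine ⟨⟨((u : ℝ) + 1) / 2, hu2⟩, ?_⟩
      apply Subtype.ext
      show D (((u : ℝ) + 1) / 2) = (f1 u : V → ℝ)
      rw [hD]
      by_cases h : ((u : ℝ) + 1) / 2 ≤ 2⁻¹
      · have hu0 : (u : ℝ) = 0 := le_antisymm (by linarith) u.2.1
        simp only [if_pos h]
        have h1 : 2 * (((u : ℝ) + 1) / 2) * c = c := by rw [hu0]; ring
        rw [h1, ← hf10]
        have : u = 0 := Subtype.ext hu0
        rw [this]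
      · simp only [if_neg h]
        have h1 : 2 * (((u : ℝ) + 1) / 2) - 1 = (u : ℝ) := by ring
        rw [h1, hF1eq u]
    refine ⟨g, hgc, hginj, hsub, ?_⟩
    have h01 : (0:ℝ) ∈ Set.Icc (0:ℝ) 1 := by norm_num
    refine ⟨⟨0, h01⟩, ?_⟩
    show D 0 = vertexPoint v
    rw [hD]
    simp only [if_pos (by norm_num : (0:ℝ) ≤ 2⁻¹)]
    rw [show 2 * (0:ℝ) * c = 0 by ring, edgePoint_zero]

end Step

section Main
variable {V : Type*} {G : SimpleGraph V}

lemma iterate_extend (T : Finset ↥(GraphRealization G)) :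
    ∀ f : ↥unitInterval → ↥(GraphRealization G), Continuous f → Function.Injective f →
    (∀ p ∈ T, ((p : V → ℝ) ∈ Set.range fun u => (f u : V → ℝ)) ∨
      ∃ v w, G.Adj v w ∧ (p : V → ℝ) = vertexPoint v ∧
        edgePoint v w 4⁻¹ ∈ Set.range fun u => (f u : V → ℝ)) →
    ∃ g : ↥unitInterval → ↥(GraphRealization G), Continuous g ∧ Function.Injective g ∧
      Set.range f ⊆ Set.range g ∧ ∀ p ∈ T, p ∈ Set.range g := by
  classical
  induction T using Finset.induction_on with
  | empty => exact fun f hc hi _ => ⟨f, hc, hi, subset_rfl, by simp⟩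
  | insert _ _ hpT =>
    rename_i p T ih
    intro f hc hi hP
    rcases hP p (Finset.mem_insert_self p T) with hin | ⟨v, w, hvw, hpv, hmem⟩
    · obtain ⟨g, hgc, hgi, hsub, hcov⟩ := ih f hc hi
        (fun q hq => hP q (Finset.mem_insert_of_mem hq))
      refine ⟨g, hgc, hgi, hsub, fun q hq => ?_⟩
      rcases Finset.mem_insert.1 hq with rfl | hq'
      · obtain ⟨u, hu⟩ := hin
        exact hsub ⟨u, Subtype.ext hu⟩
      · exact hcov q hq'
    · obtain ⟨g1, hg1c, hg1i, hsub1, hv1⟩ := step_extend hvw f hc hi hmem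
      have htrans : ∀ x : V → ℝ, (x ∈ Set.range fun u => (f u : V → ℝ)) →
          x ∈ Set.range fun u => (g1 u : V → ℝ) := by
        rintro x ⟨u, hu⟩
        obtain ⟨u', hu'⟩ := hsub1 (Set.mem_range_self u)
        refine ⟨u', ?_⟩
        show (g1 u' : V → ℝ) = x
        rw [hu']
        exact hu
      obtain ⟨g, hgc, hgi, hsub, hcov⟩ := ih g1 hg1c hg1i (fun q hq => by
        rcases hP q (Finset.mem_insert_of_mem hq) with h | ⟨v', w', h1, h2, h3⟩
        · exact Or.inl (htrans _ h)
        · exact Or.inr ⟨v', w', h1, h2, htrans _ h3⟩)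
      refine ⟨g, hgc, hgi, hsub1.trans hsub, fun q hq => ?_⟩
      rcases Finset.mem_insert.1 hq with rfl | hq'
      · obtain ⟨u, hu⟩ := hv1
        exact hsub ⟨u, (Subtype.ext (hpv.trans hu.symm)).symm⟩
      · exact hcov q hq'

end Main



/-- For a graph `G` in which every vertex is incident with at least one edge,
`|G|` is `n`-ac iff every at most `n` points of `|G|` lying in interiors of edges
(i.e. not vertex points) lie on a common arc. -/
theorem statement2 {V : Type*} (G : SimpleGraph V) (hV : ∀ v : V, ∃ w, G.Adj v w) (n : ℕ) :
    NArcConn ↥(GraphRealization G) n ↔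
      ∀ S : Finset ↥(GraphRealization G), S.card ≤ n →
        (∀ p ∈ S, ∀ v : V, (p : V → ℝ) ≠ vertexPoint v) →
        ∃ A : Set ↥(GraphRealization G), IsArc A ∧ ↑S ⊆ A := by
  classical
  constructor
  · exact fun h S hc _ => h S hc
  · intro H S hc
    set σ : ↥(GraphRealization G) → ↥(GraphRealization G) := fun p =>
      if h : ∃ v, (p : V → ℝ) = vertexPoint v then
        ⟨edgePoint h.choose (hV h.choose).choose 4⁻¹,
          edgePoint_mem (hV h.choose).choose_spec (by norm_num)⟩
      else p with hσ
    have hnv : ∀ q ∈ S.image σ, ∀ u : V, (q : V → ℝ) ≠ vertexPoint u := by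
      intro q hq u
      obtain ⟨p, hp, rfl⟩ := Finset.mem_image.1 hq
      by_cases h : ∃ v, (p : V → ℝ) = vertexPoint v
      · rw [hσ]
        simp only [dif_pos h]
        exact edgePoint_ne_vertexPoint (hV h.choose).choose_spec.ne (by norm_num) (by norm_num) u
      · rw [hσ]
        simp only [dif_neg h]
        exact fun hcon => h ⟨u, hcon⟩
    obtain ⟨A, hA, hSA⟩ := H (S.image σ) (le_trans Finset.card_image_le hc) hnv
    obtain ⟨e⟩ := hA
    set f0 : ↥unitInterval → ↥(GraphRealization G) := fun u => ((e.symm u : ↥A) : ↥(GraphRealization G)) with hf0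
    have hf0c : Continuous f0 := continuous_subtype_val.comp e.symm.continuous
    have hf0i : Function.Injective f0 := Subtype.coe_injective.comp e.symm.injective
    have hf0r : ∀ x : ↥(GraphRealization G), x ∈ A → x ∈ Set.range f0 := by
      intro x hx
      exact ⟨e ⟨x, hx⟩, by rw [hf0]; simp⟩
    have hval : ∀ x : ↥(GraphRealization G), x ∈ A →
        (x : V → ℝ) ∈ Set.range fun u => (f0 u : V → ℝ) := by
      intro x hx
      obtain ⟨u, hu⟩ := hf0r x hx
      exact ⟨u, congrArg Subtype.val hu⟩
    have hP : ∀ p ∈ S, ((p : V → ℝ) ∈ Set.range fun u => (f0 u : V → ℝ)) ∨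
        ∃ v w, G.Adj v w ∧ (p : V → ℝ) = vertexPoint v ∧
          edgePoint v w 4⁻¹ ∈ Set.range fun u => (f0 u : V → ℝ) := by
      intro p hp
      have hσp : σ p ∈ A := hSA (Finset.mem_coe.2 (Finset.mem_image_of_mem σ hp))
      by_cases h : ∃ v, (p : V → ℝ) = vertexPoint v
      · refine Or.inr ⟨h.choose, (hV h.choose).choose, (hV h.choose).choose_spec,
          h.choose_spec, ?_⟩
        have hσdef : σ p = ⟨edgePoint h.choose (hV h.choose).choose 4⁻¹,
            edgePoint_mem (hV h.choose).choose_spec (by norm_num)⟩ := by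
          rw [hσ]; simp only [dif_pos h]
        have h2 := hval (σ p) hσp
        rw [hσdef] at h2
        exact h2
      · have hσdef : σ p = p := by rw [hσ]; simp only [dif_neg h]
        exact Or.inl (hval p (hσdef ▸ hσp))
    obtain ⟨g, hgc, hgi, _, hcov⟩ := iterate_extend S f0 hf0c hf0i hP
    have hemb := hgc.isClosedEmbedding hgi
    exact ⟨Set.range g, ⟨(hemb.toIsEmbedding.toHomeomorph).symm⟩,
      fun p hp => hcov p hp⟩
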